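/- For n ≥ 6 and any two distinct indices i, j ∈ {3,...,n}, the inequality x_i + x_j ≥ v_1 + v_2 is valid for all circuits on values v_1 < ... < v_n, and the minimum of x_i + x_j over all circuits equals v_1 + v_2. -/

import Mathlib

/-- A circuit on `{1,...,n}`: a permutation of `Fin n` that is a single `n`-cycle. -/
def IsCircuitPerm {n : ℕ} (σ : Equiv.Perm (Fin n)) : Prop :=
  σ.IsCycle ∧ σ.support = Finset.univ

/-- A circuit point on values `v`: `x i = v (σ i)` for some single-`n`-cycle permutation `σ`. -/
def IsCircuitPt {n : ℕ} (v : Fin n → ℝ) (x : Fin n → ℝ) : Prop :=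
  ∃ σ : Equiv.Perm (Fin n), IsCircuitPerm σ ∧ ∀ i, x i = v (σ i)

private lemma two_min {n : ℕ} (hn : 6 ≤ n) (v : Fin n → ℝ) (hv : StrictMono v)
    (a b : Fin n) (hab : a ≠ b) :
    v ⟨0, by omega⟩ + v ⟨1, by omega⟩ ≤ v a + v b := by
  wlog h : a < b generalizing a b
  · have := this b a hab.symm (lt_of_le_of_ne (not_lt.mp h) hab.symm)
    linarith
  have h0 : v ⟨0, by omega⟩ ≤ v a := hv.monotone (by simp [Fin.le_def])
  have h1 : v ⟨1, by omega⟩ ≤ v b := by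
    apply hv.monotone
    have : (a : ℕ) < (b : ℕ) := h
    simp [Fin.le_def]; omega
  linarith

/-- For `n ≥ 6` and distinct `i, j ∈ {3,…,n}`, the inequality `x_i + x_j ≥ v_1 + v_2`
is valid for all circuits, and the minimum of `x_i + x_j` over circuits equals
`v_1 + v_2`. -/
theorem stmt_10 (n : ℕ) (hn : 6 ≤ n) (v : Fin n → ℝ) (hv : StrictMono v)
    (i j : Fin n) (hij : i ≠ j) (hi : 2 ≤ (i : ℕ)) (hj : 2 ≤ (j : ℕ)) :
    (∀ x : Fin n → ℝ, IsCircuitPt v x →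
      v ⟨0, by omega⟩ + v ⟨1, by omega⟩ ≤ x i + x j) ∧
    (∃ x : Fin n → ℝ, IsCircuitPt v x ∧
      x i + x j = v ⟨0, by omega⟩ + v ⟨1, by omega⟩) := by
  set z0 : Fin n := ⟨0, by omega⟩ with hz0
  set z1 : Fin n := ⟨1, by omega⟩ with hz1
  constructor
  · rintro x ⟨σ, hσ, hx⟩
    rw [hx i, hx j]
    exact two_min hn v hv (σ i) (σ j) (fun h => hij (σ.injective h))
  · -- build a cycle list  i :: 0 :: j :: 1 :: rest
    have hiz0 : i ≠ z0 := by intro h; rw [Fin.ext_iff] at h; simp [hz0] at h; omega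
    have hiz1 : i ≠ z1 := by intro h; rw [Fin.ext_iff] at h; simp [hz1] at h; omega
    have hjz0 : j ≠ z0 := by intro h; rw [Fin.ext_iff] at h; simp [hz0] at h; omega
    have hjz1 : j ≠ z1 := by intro h; rw [Fin.ext_iff] at h; simp [hz1] at h; omega
    set s : Finset (Fin n) := {i, z0, j, z1} with hs
    set rest : List (Fin n) := (Finset.univ \ s).toList with hrest
    set l : List (Fin n) := i :: z0 :: j :: z1 :: rest with hl
    have hmemrest : ∀ x : Fin n, x ∈ rest ↔ x ∉ s := by
      intro x; rw [hrest, Finset.mem_toList, Finset.mem_sdiff]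
      simp
    have hnd : l.Nodup := by
      rw [hl]
      refine List.nodup_cons.mpr ⟨?_, List.nodup_cons.mpr ⟨?_, List.nodup_cons.mpr ⟨?_,
        List.nodup_cons.mpr ⟨?_, (Finset.univ \ s).nodup_toList⟩⟩⟩⟩
      · simp only [List.mem_cons]
        push_neg
        refine ⟨hiz0, hij, hiz1, ?_⟩
        intro h; rw [hmemrest] at h; exact h (by simp [hs])
      · simp only [List.mem_cons]
        push_neg
        refine ⟨Ne.symm hjz0, by simp [hz0, hz1, Fin.ext_iff], ?_⟩
        intro h; rw [hmemrest] at h; exact h (by simp [hs])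
      · simp only [List.mem_cons]
        push_neg
        refine ⟨hjz1, ?_⟩
        intro h; rw [hmemrest] at h; exact h (by simp [hs])
      · intro h; rw [hmemrest] at h; exact h (by simp [hs])
    have hmem : ∀ x : Fin n, x ∈ l := by
      intro x
      by_cases h : x ∈ s
      · rw [hl]; simp only [List.mem_cons]
        rcases Finset.mem_insert.mp h with h | h
        · exact Or.inl h
        rcases Finset.mem_insert.mp h with h | h
        · exact Or.inr (Or.inl h)
        rcases Finset.mem_insert.mp h with h | h
        · exact Or.inr (Or.inr (Or.inl h))
        · exact Or.inr (Or.inr (Or.inr (Or.inl (Finset.mem_singleton.mp h))))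
      · rw [hl]; simp only [List.mem_cons]
        exact Or.inr (Or.inr (Or.inr (Or.inr ((hmemrest x).mpr h))))
    have htofin : l.toFinset = Finset.univ := by
      ext x; simp [hmem x]
    have hlen : l.length = n := by
      have := List.toFinset_card_of_nodup hnd
      rw [htofin] at this
      simpa using this.symm
    set σ := l.formPerm with hσdef
    have hcyc : σ.IsCycle := List.isCycle_formPerm hnd (by omega)
    have hsupp : σ.support = Finset.univ := by
      rw [hσdef, List.support_formPerm_of_nodup l hnd, htofin]
      intro x hx
      have : l.length = 1 := by rw [hx]; rfl
      omega
    have hσi : σ i = z0 := List.formPerm_apply_head i z0 _ hnd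
    have hσj : σ j = z1 := by
      have h3 : 2 + 1 < l.length := by omega
      have := List.formPerm_apply_lt_getElem l hnd 2 h3
      exact this
    refine ⟨fun k => v (σ k), ⟨σ, ⟨hcyc, hsupp⟩, fun _ => rfl⟩, ?_⟩
    show v (σ i) + v (σ j) = v z0 + v z1
    rw [hσi, hσj]
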